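/- Let g(u₁,u₂) be a nonzero homogeneous polynomial over ℂ satisfying g(λ₁u₁, λ₂u₂) = α·g(u₁,u₂) identically for nonzero α, λ₁, λ₂ ∈ ℂ. If λ₁/λ₂ is a root of unity of order d, then g is a constant multiple of u₁^k u₂^l · ∏_{i=1}^{n} (u₁^d + α_i u₂^d) for some nonnegative integers k, l, n and constants α_i ∈ ℂ, and α = λ₁^{k+dn} λ₂^l. -/

import Mathlib

open Polynomial in
lemma aux_factor (n : ℕ) (b : ℕ → ℂ) (hbn : b n ≠ 0) :
    ∃ as : Fin n → ℂ, ∀ t s : ℂ,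
      (∑ j ∈ Finset.range (n+1), b j * t ^ j * s ^ (n - j)) = b n * ∏ i, (t + as i * s) := by
  set p : Polynomial ℂ := ∑ j ∈ Finset.range (n+1), C (b j) * X ^ j with hp
  have hcoeff : ∀ j, j ≤ n → p.coeff j = b j := by
    intro j hj
    rw [hp, Polynomial.finset_sum_coeff]
    simp only [coeff_C_mul, coeff_X_pow, mul_ite, mul_one, mul_zero]
    rw [Finset.sum_ite_eq (Finset.range (n+1)) j (fun j' => b j')]
    simp [Nat.lt_succ_of_le hj]
  have hcoeffn : p.coeff n = b n := hcoeff n le_rfl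
  have hp0 : p ≠ 0 := fun h => hbn (by rw [← hcoeffn, h, coeff_zero])
  have hdegle : p.natDegree ≤ n := by
    apply Polynomial.natDegree_sum_le_of_forall_le
    intro j hj
    refine (natDegree_C_mul_le _ _).trans ?_
    simp only [Finset.mem_range] at hj
    rw [natDegree_X_pow]; omega
  have hdeg : p.natDegree = n :=
    le_antisymm hdegle (Polynomial.le_natDegree_of_ne_zero (by rw [hcoeffn]; exact hbn))
  have hlead : p.leadingCoeff = b n := by rw [Polynomial.leadingCoeff, hdeg, hcoeffn]
  have hsplits : Splits p := IsAlgClosed.splits p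
  have hcard : p.roots.card = n := by
    rw [Polynomial.splits_iff_card_roots.mp hsplits, hdeg]
  have hfac : p = C (b n) * (p.roots.map fun a => X - C a).prod := by
    rw [← hlead]; exact hsplits.eq_prod_roots
  have hlen : p.roots.toList.length = n := by rw [Multiset.length_toList, hcard]
  set L := p.roots.toList with hL
  refine ⟨fun i => -L.get (Fin.cast hlen.symm i), fun t s => ?_⟩
  have hprodeq : ∀ f : ℂ → ℂ, (p.roots.map f).prod
      = ∏ i : Fin n, f (L.get (Fin.cast hlen.symm i)) := by
    intro f
    conv_lhs => rw [← Multiset.coe_toList p.roots]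
    rw [← hL, Multiset.map_coe, Multiset.prod_coe]
    conv_lhs => rw [← List.ofFn_get L, List.map_ofFn, List.prod_ofFn]
    exact Fintype.prod_equiv (finCongr hlen) _ _ (fun i => rfl)
  have peval : ∀ y : ℂ, p.eval y = ∑ j ∈ Finset.range (n+1), b j * y ^ j := by
    intro y
    rw [hp, Polynomial.eval_finset_sum]
    exact Finset.sum_congr rfl fun j hj => by
      simp [Finset.mem_range] at hj
      simp [hcoeff]
  rcases eq_or_ne s 0 with hs | hs
  · subst hs
    rw [Finset.sum_eq_single n]
    · simp [Finset.prod_const]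
    · intro j hj hjn
      simp only [Finset.mem_range] at hj
      rw [zero_pow (by omega), mul_zero]
    · intro h; exact absurd (Finset.self_mem_range_succ n) h
  · have key : (∑ j ∈ Finset.range (n+1), b j * t ^ j * s ^ (n - j)) = s ^ n * p.eval (t / s) := by
      rw [peval, Finset.mul_sum]
      refine Finset.sum_congr rfl fun j hj => ?_
      simp only [Finset.mem_range] at hj
      have hjn : j ≤ n := by omega
      have hss : s ^ n = s ^ (n - j) * s ^ j := by rw [← pow_add]; congr 1; omega
      rw [div_pow, hss]
      field_simp
    rw [key, hfac]
    rw [Polynomial.eval_mul, Polynomial.eval_C, Polynomial.eval_multiset_prod, Multiset.map_map]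
    have : (p.roots.map fun a => Polynomial.eval (t/s) (X - C a)).prod
        = (p.roots.map fun a => t/s - a).prod := by
      congr 1; apply Multiset.map_congr rfl; intro a _; simp
    rw [Function.comp_def]
    simp only [Polynomial.eval_sub, Polynomial.eval_X, Polynomial.eval_C]
    rw [hprodeq]
    have hsn : s ^ n = ∏ _i : Fin n, s := by simp [Finset.prod_const]
    rw [hsn, mul_comm (∏ _i : Fin n, s), mul_assoc, ← Finset.prod_mul_distrib]
    congr 1
    refine Finset.prod_congr rfl fun i _ => ?_
    field_simp
    ring

open MvPolynomial

/-- A nonzero homogeneous polynomial `g(u₁,u₂)` over ℂ with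
`g(λ₁u₁, λ₂u₂) = α g(u₁,u₂)` where `λ₁/λ₂` is a root of unity of order `d` is a
constant multiple of `u₁^k u₂^l ∏ᵢ (u₁^d + αᵢ u₂^d)`, and `α = λ₁^{k+dn} λ₂^l`. -/
theorem stmt_7 (g : MvPolynomial (Fin 2) ℂ) (m : ℕ) (hg : g.IsHomogeneous m) (hg0 : g ≠ 0)
    (α l1 l2 : ℂ) (hα : α ≠ 0) (hl1 : l1 ≠ 0) (hl2 : l2 ≠ 0)
    (d : ℕ) (hd : 0 < d) (hord : orderOf (l1 / l2) = d)
    (hfe : ∀ u1 u2 : ℂ, eval ![l1 * u1, l2 * u2] g = α * eval ![u1, u2] g) :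
    ∃ (c : ℂ) (k l n : ℕ) (as : Fin n → ℂ),
      g = C c * X 0 ^ k * X 1 ^ l * ∏ i, (X 0 ^ d + C (as i) * X 1 ^ d) ∧
      α = l1 ^ (k + d * n) * l2 ^ l := by
  have hhom : ∀ σ ∈ g.support, σ 0 + σ 1 = m := by
    intro σ hσ
    have h := hg (mem_support_iff.mp hσ)
    simp [Finsupp.weight_apply, Finsupp.sum_fintype, Fin.sum_univ_two] at h
    omega
  have hA : ∀ σ ∈ g.support, l1 ^ σ 0 * l2 ^ σ 1 = α := by
    set G : MvPolynomial (Fin 2) ℂ :=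
      ∑ σ ∈ g.support, monomial σ (l1 ^ σ 0 * l2 ^ σ 1 * coeff σ g) with hGdef
    have hG : G = C α * g := by
      apply MvPolynomial.funext
      intro x
      have hx : (fun i => ![l1 * x 0, l2 * x 1] i) = fun i => ![l1, l2] i * x i := by
        funext i; fin_cases i <;> simp
      have hxx : (![x 0, x 1] : Fin 2 → ℂ) = x := by
        funext i; fin_cases i <;> simp
      have h1 : eval x G = eval (fun i => ![l1, l2] i * x i) g := by
        rw [hGdef, map_sum, eval_eq' (fun i => ![l1, l2] i * x i) g]
        refine Finset.sum_congr rfl fun σ hσ => ?_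
        rw [eval_monomial, Finsupp.prod_pow, Fin.prod_univ_two, Fin.prod_univ_two]
        simp only [Matrix.cons_val_zero, Matrix.cons_val_one, Matrix.head_cons]
        ring
      rw [h1, ← hx, hfe (x 0) (x 1), hxx, eval_mul, eval_C]
    intro σ hσ
    have hcG : coeff σ G = l1 ^ σ 0 * l2 ^ σ 1 * coeff σ g := by
      rw [hGdef]
      rw [MvPolynomial.coeff_sum]
      rw [Finset.sum_eq_single σ]
      · rw [coeff_monomial, if_pos rfl]
      · intro τ _ hτ; rw [coeff_monomial, if_neg hτ]
      · intro h; exact absurd hσ h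
    have hc2 : coeff σ G = α * coeff σ g := by rw [hG, coeff_C_mul]
    have hcne : coeff σ g ≠ 0 := mem_support_iff.mp hσ
    have := hcG.symm.trans hc2
    exact mul_right_cancel₀ hcne this
  have hstep : ∀ σ ∈ g.support, ∀ τ ∈ g.support, σ 0 ≤ τ 0 → d ∣ τ 0 - σ 0 := by
    intro σ hσ τ hτ hle
    set a := τ 0 - σ 0 with ha
    have hτ0 : τ 0 = σ 0 + a := by omega
    have h1 : σ 1 = τ 1 + a := by have := hhom σ hσ; have := hhom τ hτ; omega
    have hE := (hA τ hτ).trans (hA σ hσ).symm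
    rw [hτ0] at hE; rw [h1] at hE
    rw [pow_add, pow_add] at hE
    have h2 : l1 ^ σ 0 * l2 ^ τ 1 * l1 ^ a = l1 ^ σ 0 * l2 ^ τ 1 * l2 ^ a := by
      linear_combination hE
    have h3 : l1 ^ a = l2 ^ a :=
      mul_left_cancel₀ (mul_ne_zero (pow_ne_zero _ hl1) (pow_ne_zero _ hl2)) h2
    have h4 : (l1 / l2) ^ a = 1 := by
      rw [div_pow, h3, div_self (pow_ne_zero _ hl2)]
    rw [← hord]
    exact orderOf_dvd_of_pow_eq_one h4
  have hsne : g.support.Nonempty := support_nonempty.mpr hg0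
  set S : Finset ℕ := g.support.image (fun σ => σ 0) with hS
  have hSne : S.Nonempty := hsne.image _
  set k := S.min' hSne with hk
  set K := S.max' hSne with hK
  obtain ⟨σk, hσk, hσk0⟩ := Finset.mem_image.mp (S.min'_mem hSne)
  obtain ⟨σK, hσK, hσK0⟩ := Finset.mem_image.mp (S.max'_mem hSne)
  rw [← hk] at hσk0
  rw [← hK] at hσK0
  have hkK : k ≤ K := S.min'_le _ (S.max'_mem hSne)
  have hmemS : ∀ σ ∈ g.support, k ≤ σ 0 ∧ σ 0 ≤ K := fun σ hσ =>
    ⟨S.min'_le _ (Finset.mem_image_of_mem _ hσ), S.le_max' _ (Finset.mem_image_of_mem _ hσ)⟩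
  have hdvdK : d ∣ K - k := by
    rw [← hσk0, ← hσK0]
    exact hstep σk hσk σK hσK (by omega)
  set n := (K - k) / d with hn
  have hKn : K = k + d * n := by
    have h1 : d * n = K - k := by
      rw [hn, Nat.mul_comm]
      exact Nat.div_mul_cancel hdvdK
    omega
  set l := m - (k + d * n) with hl
  have hKm : k + d * n ≤ m := by
    have := hhom σK hσK
    omega
  -- exponent structure
  set e : ℕ → (Fin 2 →₀ ℕ) := fun i => Finsupp.single 0 i + Finsupp.single 1 (m - i) with he
  have he0 : ∀ i, (e i) 0 = i := by intro i; simp [he, Finsupp.single_apply]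
  have he1 : ∀ i, (e i) 1 = m - i := by intro i; simp [he, Finsupp.single_apply]
  have hσe : ∀ σ ∈ g.support, σ = e (σ 0) := by
    intro σ hσ
    have hh := hhom σ hσ
    ext i
    fin_cases i
    · show σ 0 = (e (σ 0)) 0
      rw [he0]
    · show σ 1 = (e (σ 0)) 1
      rw [he1]; omega
  have hrep : ∀ σ ∈ g.support, ∃ j ≤ n, σ 0 = k + d * j := by
    intro σ hσ
    obtain ⟨hkσ, hσK'⟩ := hmemS σ hσ
    obtain ⟨j, hj⟩ := hstep σk hσk σ hσ (by omega)
    rw [hσk0] at hj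
    refine ⟨j, ?_, by omega⟩
    have : d * j ≤ d * n := by omega
    exact Nat.le_of_mul_le_mul_left this hd
  set b : ℕ → ℂ := fun j => coeff (e (k + d * j)) g with hb
  have hbn : b n ≠ 0 := by
    have h1 : σK = e (k + d * n) := by rw [← hKn, ← hσK0]; exact hσe σK hσK
    rw [hb]
    simp only
    rw [← h1]
    exact mem_support_iff.mp hσK
  obtain ⟨as, key⟩ := aux_factor n b hbn
  refine ⟨b n, k, l, n, as, ?_, ?_⟩
  · -- main identity
    apply MvPolynomial.funext
    intro x
    have einj : ∀ j ∈ Finset.range (n+1), ∀ j' ∈ Finset.range (n+1),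
        e (k + d * j) = e (k + d * j') → j = j' := by
      intro j _ j' _ hjj
      have := congrArg (fun f => f 0) hjj
      simp only [he0] at this
      have : d * j = d * j' := by omega
      exact Nat.eq_of_mul_eq_mul_left hd this
    have hsub : g.support ⊆ (Finset.range (n+1)).image (fun j => e (k + d * j)) := by
      intro σ hσ
      obtain ⟨j, hjn, hj0⟩ := hrep σ hσ
      exact Finset.mem_image.mpr ⟨j, Finset.mem_range.mpr (by omega), by rw [← hj0]; exact (hσe σ hσ).symm⟩
    have h1 : eval x g = ∑ j ∈ Finset.range (n+1), b j * (x 0 ^ (k + d * j) * x 1 ^ (m - (k + d * j))) := by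
      rw [eval_eq' x g]
      rw [Finset.sum_subset hsub]
      · rw [Finset.sum_image einj]
        refine Finset.sum_congr rfl fun j hj => ?_
        rw [Fin.prod_univ_two, he0, he1]
      · intro σ _ hσ
        rw [notMem_support_iff.mp hσ, zero_mul]
    have h2 : ∀ j ∈ Finset.range (n+1),
        b j * (x 0 ^ (k + d * j) * x 1 ^ (m - (k + d * j)))
        = x 0 ^ k * x 1 ^ l * (b j * (x 0 ^ d) ^ j * (x 1 ^ d) ^ (n - j)) := by
      intro j hj
      simp only [Finset.mem_range] at hj
      have hjn : j ≤ n := by omega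
      have hmul2 : d * n = d * j + d * (n - j) := by
        rw [← Nat.mul_add]; congr 1; omega
      have hexp : m - (k + d * j) = l + d * (n - j) := by omega
      rw [hexp, pow_add, pow_add, ← pow_mul, ← pow_mul]
      ring
    rw [h1, Finset.sum_congr rfl h2, ← Finset.mul_sum, key (x 0 ^ d) (x 1 ^ d)]
    simp only [eval_mul, eval_C, eval_pow, eval_X, map_prod, eval_add]
    ring
  · -- alpha identity
    have h1 := hA σK hσK
    rw [hσK0, hKn] at h1
    have h2 : σK 1 = l := by
      have := hhom σK hσK
      omega
    rw [h2] at h1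
    exact h1.symm
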